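/- Let q be a quadratic form of signature (1,n) on a real vector space V with n ≥ 1. If x, y are nonzero vectors with q(x) ≥ 0, q(y) ≥ 0 lying in the closure of the same connected component of the positive cone, then b(x,y) ≥ 0, with equality only if x and y are proportional isotropic vectors. -/

import Mathlib

set_option maxHeartbeats 800000

open scoped RealInnerProductSpace

noncomputable def spatialPart (n : ℕ) (V : Type*) [NormedAddCommGroup V] [NormedSpace ℝ V]
    (e : V ≃ₗ[ℝ] (Fin (n+1) → ℝ)) : V →ₗ[ℝ] EuclideanSpace ℝ (Fin n) where
  toFun v := WithLp.toLp 2 (fun i : Fin n => e v i.succ)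
  map_add' u v := by ext i; simp
  map_smul' c v := by ext i; simp

/-- two nonzero vectors with q ≥ 0 in the closure of the same component of the
positive cone pair nonnegatively, with equality only for proportional isotropic vectors. -/
theorem pairing_nonneg_on_closed_cone (n : ℕ) (hn : 1 ≤ n)
    (V : Type*) [NormedAddCommGroup V] [NormedSpace ℝ V]
    (b : V → V → ℝ) (e : V ≃ₗ[ℝ] (Fin (n+1) → ℝ))
    (hb : ∀ v w, b v w = (e v 0) * (e w 0) - ∑ i : Fin n, (e v i.succ) * (e w i.succ))
    (x y : V) (hx0 : x ≠ 0) (hy0 : y ≠ 0) (hx : 0 ≤ b x x) (hy : 0 ≤ b y y)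
    (hcl : ∃ z : V, 0 < b z z ∧
      x ∈ closure (connectedComponentIn {v | 0 < b v v} z) ∧
      y ∈ closure (connectedComponentIn {v | 0 < b v v} z)) :
    0 ≤ b x y ∧ (b x y = 0 → b x x = 0 ∧ b y y = 0 ∧ ∃ t : ℝ, y = t • x) := by
  classical
  have hfd : FiniteDimensional ℝ V := e.symm.finiteDimensional
  set P : V →ₗ[ℝ] EuclideanSpace ℝ (Fin n) := spatialPart n V e with hPdef
  have hPapp : ∀ (v : V) (i : Fin n), P v i = e v i.succ := fun v i => rfl
  have hinner : ∀ v w : V, ⟪P v, P w⟫ = ∑ i : Fin n, e v i.succ * e w i.succ := by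
    intro v w
    rw [PiLp.inner_apply]
    simp [hPapp, RCLike.inner_apply]
    exact Finset.sum_congr rfl (fun i _ => mul_comm _ _)
  have hb' : ∀ v w, b v w = e v 0 * e w 0 - ⟪P v, P w⟫ := by
    intro v w; rw [hb, hinner]
  have hself : ∀ v, b v v = (e v 0) ^ 2 - ‖P v‖ ^ 2 := by
    intro v
    rw [hb', real_inner_self_eq_norm_sq]; ring
  have hPcont : Continuous fun v : V => ‖P v‖ := P.continuous_of_finiteDimensional.norm
  have hfcont : Continuous fun v : V => e v 0 :=
    (continuous_apply (0 : Fin (n+1))).comp e.toLinearMap.continuous_of_finiteDimensional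
  obtain ⟨z, hz, hxcl, hycl⟩ := hcl
  obtain ⟨s, hs1, hxle, hyle⟩ :
      ∃ s : ℝ, s * s = 1 ∧ ‖P x‖ ≤ s * e x 0 ∧ ‖P y‖ ≤ s * e y 0 := by
    set Cp := {v : V | ‖P v‖ < e v 0} with hCp
    set Cm := {v : V | e v 0 < -‖P v‖} with hCm
    have hCpo : IsOpen Cp := isOpen_lt hPcont hfcont
    have hCmo : IsOpen Cm := isOpen_lt hfcont hPcont.neg
    have hdisj : Disjoint Cp Cm := by
      rw [Set.disjoint_left]
      intro v hv1 hv2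
      have h0 := norm_nonneg (P v)
      simp only [hCp, hCm, Set.mem_setOf_eq] at hv1 hv2
      linarith
    have hcover : {v : V | 0 < b v v} ⊆ Cp ∪ Cm := by
      intro v hv
      simp only [Set.mem_setOf_eq] at hv
      rw [hself v] at hv
      have h0 := norm_nonneg (P v)
      rcases le_or_gt (e v 0) 0 with h | h
      · right; simp only [hCm, Set.mem_setOf_eq]; nlinarith
      · left; simp only [hCp, Set.mem_setOf_eq]; nlinarith
    have hzc : z ∈ connectedComponentIn {v : V | 0 < b v v} z := mem_connectedComponentIn hz
    have hpc : IsPreconnected (connectedComponentIn {v : V | 0 < b v v} z) :=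
      isPreconnected_connectedComponentIn
    have hsub := connectedComponentIn_subset {v : V | 0 < b v v} z
    rcases hpc.subset_or_subset hCpo hCmo hdisj (hsub.trans hcover) with h | h
    · have hclsub : closure (connectedComponentIn {v : V | 0 < b v v} z)
          ⊆ {v : V | ‖P v‖ ≤ e v 0} :=
        closure_minimal (h.trans fun v hv => le_of_lt (by simpa [hCp] using hv))
          (isClosed_le hPcont hfcont)
      refine ⟨1, by norm_num, ?_, ?_⟩
      · simpa using hclsub hxcl
      · simpa using hclsub hycl
    · have hclsub : closure (connectedComponentIn {v : V | 0 < b v v} z)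
          ⊆ {v : V | e v 0 ≤ -‖P v‖} :=
        closure_minimal (h.trans fun v hv => le_of_lt (by simpa [hCm] using hv))
          (isClosed_le hfcont hPcont.neg)
      refine ⟨-1, by norm_num, ?_, ?_⟩
      · have := hclsub hxcl; simp only [Set.mem_setOf_eq] at this; linarith
      · have := hclsub hycl; simp only [Set.mem_setOf_eq] at this; linarith
  set a := s * e x 0 with ha
  set c := s * e y 0 with hc
  have hexa : e x 0 = s * a := by rw [ha]; linear_combination (-(e x 0)) * hs1
  have heyc : e y 0 = s * c := by rw [hc]; linear_combination (-(e y 0)) * hs1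
  have ha0 : 0 < a := by
    rcases lt_or_ge 0 a with h | h
    · exact h
    · exfalso
      have hnx : ‖P x‖ = 0 := le_antisymm (hxle.trans h) (norm_nonneg _)
      have haz : a = 0 := le_antisymm h ((norm_nonneg (P x)).trans hxle)
      apply hx0
      rw [← e.map_eq_zero_iff]
      funext j
      refine Fin.cases ?_ (fun i => ?_) j
      · show e x 0 = 0
        rw [hexa, haz, mul_zero]
      · have hPz : P x = 0 := norm_eq_zero.mp hnx
        have := congrFun (congrArg (fun f : EuclideanSpace ℝ (Fin n) => (f : Fin n → ℝ)) hPz) i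
        simpa [hPapp] using this
  have hc0 : 0 < c := by
    rcases lt_or_ge 0 c with h | h
    · exact h
    · exfalso
      have hny : ‖P y‖ = 0 := le_antisymm (hyle.trans h) (norm_nonneg _)
      have hcz : c = 0 := le_antisymm h ((norm_nonneg (P y)).trans hyle)
      apply hy0
      rw [← e.map_eq_zero_iff]
      funext j
      refine Fin.cases ?_ (fun i => ?_) j
      · show e y 0 = 0
        rw [heyc, hcz, mul_zero]
      · have hPz : P y = 0 := norm_eq_zero.mp hny
        have := congrFun (congrArg (fun f : EuclideanSpace ℝ (Fin n) => (f : Fin n → ℝ)) hPz) i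
        simpa [hPapp] using this
  have hprod : e x 0 * e y 0 = a * c := by
    rw [hexa, heyc]; linear_combination (a * c) * hs1
  have hCS : ⟪P x, P y⟫ ≤ ‖P x‖ * ‖P y‖ := real_inner_le_norm _ _
  have hmul : ‖P x‖ * ‖P y‖ ≤ a * c :=
    mul_le_mul hxle hyle (norm_nonneg _) ha0.le
  constructor
  · rw [hb', hprod]; linarith
  · intro heq
    rw [hb', hprod] at heq
    have hinn : ⟪P x, P y⟫ = a * c := by linarith
    have heqn : ‖P x‖ * ‖P y‖ = a * c := le_antisymm hmul (by rw [← hinn]; exact hCS)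
    have hpx0 : 0 < ‖P x‖ := by nlinarith [norm_nonneg (P x), norm_nonneg (P y), mul_pos ha0 hc0]
    have hpy0 : 0 < ‖P y‖ := by nlinarith [norm_nonneg (P x), norm_nonneg (P y), mul_pos ha0 hc0]
    have hux : ‖P x‖ = a := by
      nlinarith [mul_le_mul_of_nonneg_left hyle ha0.le,
        mul_le_mul_of_nonneg_right hxle (norm_nonneg (P y)), hpy0]
    have hvy : ‖P y‖ = c := by
      nlinarith [mul_le_mul_of_nonneg_left hxle hc0.le,
        mul_le_mul_of_nonneg_right hyle (norm_nonneg (P x)), hpx0]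
    have hinner_eq : ⟪P x, P y⟫ = ‖P x‖ * ‖P y‖ := by rw [hux, hvy]; exact hinn
    have hprop := inner_eq_norm_mul_iff_real.mp hinner_eq
    rw [hux, hvy] at hprop
    refine ⟨?_, ?_, c / a, ?_⟩
    · rw [hself, hux, hexa]; linear_combination (a ^ 2) * hs1
    · rw [hself, hvy, heyc]; linear_combination (c ^ 2) * hs1
    · apply e.injective
      rw [map_smul]
      funext j
      refine Fin.cases ?_ (fun i => ?_) j
      · show e y 0 = ((c / a) • e x) 0
        rw [Pi.smul_apply, smul_eq_mul, hexa, heyc]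
        field_simp
      · have hpi := congrFun (congrArg (fun f : EuclideanSpace ℝ (Fin n) => (f : Fin n → ℝ)) hprop) i
        simp only [PiLp.smul_apply, smul_eq_mul, hPapp] at hpi
        show e y i.succ = ((c / a) • e x) i.succ
        rw [Pi.smul_apply, smul_eq_mul]
        field_simp
        linarith [hpi]
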